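/- Duality Theorem: Let X and Y be disjoint finite sets and let Q = Q(X∪Y) be a blue/red colored Boolean lattice which contains no blue copy of Λ. Then exactly one of the following holds: there is a red X-good copy of Q(X) in Q, or there is a blue Y-shrub in Q. -/

import Mathlib

set_option linter.unusedSectionVars false
set_option linter.unusedVariables false
set_option maxHeartbeats 1000000

/-- With blue/red coloring `c` (blue = `true`, red = `false`) of the Boolean lattice on a
ground set partitioned into `X ∪ Y`, there is a red `X`-good copy of `Q(X)`: an embedding
`φ` of `Q(X)` with all images red and `φ(A) ∩ X = A` for all `A ⊆ X`. -/
def RedXGoodCopy {V : Type*} [DecidableEq V] (c : Finset V → Bool) (X : Finset V) : Prop :=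
  ∃ φ : Finset V → Finset V,
    (∀ A B : Finset V, A ⊆ X → B ⊆ X → (A ⊆ B ↔ φ A ⊆ φ B)) ∧
    (∀ A : Finset V, A ⊆ X → φ A ∩ X = A) ∧
    (∀ A : Finset V, A ⊆ X → c (φ A) = false)

/-- `S` is an ordered subset of `Y`: a sequence of distinct elements of `Y`
(a vertex of the factorial tree `O(Y)`, ordered by the prefix relation `<+:`). -/
def OrdSubset {V : Type*} (Y : Finset V) (S : List V) : Prop :=
  S.Nodup ∧ ∀ v ∈ S, v ∈ Y

/-- `τ` is a `Y`-good embedding of the factorial tree `O(Y)` into the Boolean lattice: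
for ordered subsets `S, T` of `Y`, `S` is a prefix of `T` iff `τ S ⊆ τ T`, and
`τ S ∩ Y` is the underlying set of `S`. Its image is a `Y`-shrub. -/
def IsShrubMap {V : Type*} [DecidableEq V] (Y : Finset V) (τ : List V → Finset V) : Prop :=
  (∀ S T : List V, OrdSubset Y S → OrdSubset Y T → (S <+: T ↔ τ S ⊆ τ T)) ∧
  (∀ S : List V, OrdSubset Y S → τ S ∩ Y = S.toFinset)

/-- `τ` determines a weak `Y`-shrub: `τ S ∩ Y` is the underlying set of `S` for every
ordered subset `S` of `Y`, and `τ S ⊊ τ T` whenever `S` is a strict prefix of `T`. -/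
def IsWeakShrubMap {V : Type*} [DecidableEq V] (Y : Finset V) (τ : List V → Finset V) : Prop :=
  (∀ S T : List V, OrdSubset Y S → OrdSubset Y T → S <+: T → S ≠ T → τ S ⊂ τ T) ∧
  (∀ S : List V, OrdSubset Y S → τ S ∩ Y = S.toFinset)

/-- There is a monochromatic blue `Y`-shrub (blue = `true`). -/
def BlueYShrub {V : Type*} [DecidableEq V] (c : Finset V → Bool) (Y : Finset V) : Prop :=
  ∃ τ : List V → Finset V, IsShrubMap Y τ ∧ ∀ S : List V, OrdSubset Y S → c (τ S) = true

/-- The coloring `c` admits no blue copy of the poset `Λ`: there are no blue vertices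
`A, B, C` with `A ⊂ C`, `B ⊂ C` and `A`, `B` incomparable. -/
def NoBlueLambda {V : Type*} (c : Finset V → Bool) : Prop :=
  ¬ ∃ A B C : Finset V, c A = true ∧ c B = true ∧ c C = true ∧
      A ⊂ C ∧ B ⊂ C ∧ ¬ A ⊆ B ∧ ¬ B ⊆ A

open Finset

section AuxHelpers

variable {V : Type*} [DecidableEq V]

/-- Auxiliary: a blue weak shrub above floor `F`, with room `X` and branch set `Y`. -/
def ShrubAbove (c : Finset V → Bool) (F X Y : Finset V) : Prop :=
  ∃ τ : List V → Finset V,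
    (∀ S : List V, OrdSubset Y S →
      F ⊆ τ S ∧ τ S ⊆ F ∪ X ∪ Y ∧ τ S ∩ Y = S.toFinset ∧ c (τ S) = true) ∧
    (∀ S T : List V, OrdSubset Y S → OrdSubset Y T → S <+: T → S ≠ T → τ S ⊂ τ T)

lemma ordsubset_of_prefix {Y : Finset V} {S T : List V} (h : OrdSubset Y T) (hp : S <+: T) :
    OrdSubset Y S :=
  ⟨h.1.sublist hp.sublist, fun v hv => h.2 v (hp.sublist.mem hv)⟩

lemma diverge : ∀ (S T : List V), ¬ S <+: T →
    (T <+: S ∧ T ≠ S) ∨ ∃ R a b S₂ T₂, S = R ++ a :: S₂ ∧ T = R ++ b :: T₂ ∧ a ≠ b := by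
  intro S
  induction S with
  | nil => intro T h; exact absurd (List.nil_prefix) h
  | cons a S' ih =>
    intro T h
    cases T with
    | nil => exact Or.inl ⟨List.nil_prefix, by simp⟩
    | cons b T' =>
      by_cases hab : a = b
      · subst hab
        have h' : ¬ S' <+: T' := fun hp => h (by simpa [List.cons_prefix_cons] using hp)
        rcases ih T' h' with ⟨h1, h2⟩ | ⟨R, x, y, S₂, T₂, e1, e2, hxy⟩
        · exact Or.inl ⟨by simpa [List.cons_prefix_cons] using h1, by simpa using h2⟩
        · exact Or.inr ⟨a :: R, x, y, S₂, T₂, by simp [e1], by simp [e2], hxy⟩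
      · exact Or.inr ⟨[], a, b, S', T', rfl, rfl, hab⟩

end AuxHelpers

section AuxHelpers2
variable {V : Type*} [DecidableEq V]

lemma weak_to_strong {c : Finset V → Bool} {Y : Finset V} {τ : List V → Finset V}
    (hΛ : NoBlueLambda c) (hw : IsWeakShrubMap Y τ)
    (hb : ∀ S, OrdSubset Y S → c (τ S) = true) : IsShrubMap Y τ := by
  obtain ⟨hmono, hgood⟩ := hw
  refine ⟨?_, hgood⟩
  intro S T hS hT
  constructor
  · intro hp
    by_cases he : S = T
    · subst he; exact subset_rfl
    · exact (hmono S T hS hT hp he).subset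
  · intro hsub
    by_contra hns
    rcases diverge S T hns with ⟨h1, h2⟩ | ⟨R, a, b, S₂, T₂, e1, e2, hab⟩
    · exact (hmono T S hT hS h1 h2).not_subset hsub
    · -- divergence case
      have hSa : (R ++ [a]) <+: S := by rw [e1]; exact ⟨S₂, by simp⟩
      have hTb : (R ++ [b]) <+: T := by rw [e2]; exact ⟨T₂, by simp⟩
      have hOSa : OrdSubset Y (R ++ [a]) := ordsubset_of_prefix hS hSa
      have hOTb : OrdSubset Y (R ++ [b]) := ordsubset_of_prefix hT hTb
      have haY : a ∈ Y := hOSa.2 a (by simp)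
      have hbY : b ∈ Y := hOTb.2 b (by simp)
      have haR : a ∉ R := by
        have := hS.1; rw [e1] at this
        simp [List.nodup_append] at this
        intro h; exact (this.2.2 a h).1 rfl
      have hbR : b ∉ R := by
        have := hT.1; rw [e2] at this
        simp [List.nodup_append] at this
        intro h; exact (this.2.2 b h).1 rfl
      have hgS := hgood S hS
      have hgT := hgood T hT
      have hgA := hgood _ hOSa
      have hgB := hgood _ hOTb
      have haS : a ∈ τ S := by
        have : a ∈ τ S ∩ Y := by rw [hgS, e1]; simp
        exact (mem_inter.mp this).1
      have haτT : a ∈ τ T := hsub haS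
      -- case T = R ++ [b] (T₂ = [])
      by_cases hT2 : T₂ = []
      · subst hT2
        have : a ∈ τ T ∩ Y := mem_inter.mpr ⟨haτT, haY⟩
        rw [hgT, e2] at this
        simp at this
        rcases this with h | h
        · exact hab h
        · exact haR h
      · have hne : R ++ [b] ≠ T := by
          rw [e2]; intro h
          have := List.append_inj_right h rfl
          simp at this
          exact hT2 this
        have hBC : τ (R ++ [b]) ⊂ τ T := hmono _ T hOTb hT hTb hne
        have hAS : τ (R ++ [a]) ⊆ τ S := by
          by_cases hAeq : R ++ [a] = S
          · rw [hAeq]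
          · exact (hmono _ S hOSa hS hSa hAeq).subset
        have hAC : τ (R ++ [a]) ⊆ τ T := hAS.trans hsub
        have hbC : b ∈ τ T := by
          have : b ∈ τ T ∩ Y := by rw [hgT, e2]; simp
          exact (mem_inter.mp this).1
        have hbA : b ∉ τ (R ++ [a]) := by
          intro h
          have : b ∈ τ (R ++ [a]) ∩ Y := mem_inter.mpr ⟨h, hbY⟩
          rw [hgA] at this
          simp at this
          rcases this with h' | h'
          · exact hab h'.symm
          · exact hbR h'
        have haB : a ∉ τ (R ++ [b]) := by
          intro h
          have : a ∈ τ (R ++ [b]) ∩ Y := mem_inter.mpr ⟨h, haY⟩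
          rw [hgB] at this
          simp at this
          rcases this with h' | h'
          · exact hab h'
          · exact haR h'
        have haA : a ∈ τ (R ++ [a]) := by
          have : a ∈ τ (R ++ [a]) ∩ Y := by rw [hgA]; simp
          exact (mem_inter.mp this).1
        have hbB : b ∈ τ (R ++ [b]) := by
          have : b ∈ τ (R ++ [b]) ∩ Y := by rw [hgB]; simp
          exact (mem_inter.mp this).1
        exact hΛ ⟨τ (R ++ [a]), τ (R ++ [b]), τ T,
          hb _ hOSa, hb _ hOTb, hb T hT,
          (Finset.ssubset_iff_of_subset hAC).mpr ⟨b, hbC, hbA⟩, hBC,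
          fun h => haB (h haA), fun h => hbA (h hbB)⟩


lemma inf_mem_chain [Fintype V] (s : Finset (Finset V)) (hne : s.Nonempty)
    (hch : ∀ a ∈ s, ∀ b ∈ s, a ⊆ b ∨ b ⊆ a) : s.inf id ∈ s := by
  obtain ⟨m, hm, hmin⟩ := s.exists_minimal hne
  have hmle : ∀ x ∈ s, m ⊆ x := by
    intro x hx
    rcases hch m hm x hx with h | h
    · exact h
    · by_cases he : x = m
      · subst he; exact h
      · exact absurd (le_antisymm h (hmin hx h)) he
  have hinf : s.inf id = m := le_antisymm (Finset.inf_le hm) (Finset.le_inf hmle)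
  rw [hinf]; exact hm

lemma empty_case (c : Finset V → Bool) (F X : Finset V) :
    (∃ g : Finset V → Finset V,
        (∀ A, A ⊆ X → g A ⊆ (∅ : Finset V)) ∧
        (∀ A B, A ⊆ X → B ⊆ X → A ⊆ B → g A ⊆ g B) ∧
        (∀ A, A ⊆ X → c (F ∪ A ∪ g A) = false)) ∨
      ShrubAbove c F X ∅ := by
  classical
  by_cases hex : ∃ A', A' ⊆ X ∧ c (F ∪ A') = true
  · obtain ⟨A', hA', hb⟩ := hex
    right
    refine ⟨fun _ => F ∪ A', ?_, ?_⟩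
    · intro S hS
      have hSnil : S = [] := by
        cases S with
        | nil => rfl
        | cons a S' => exact absurd (hS.2 a (by simp)) (by simp)
      subst hSnil
      refine ⟨subset_union_left, ?_, by simp, hb⟩
      intro v hv; rcases mem_union.mp hv with h | h
      · exact mem_union_left _ (mem_union_left _ h)
      · exact mem_union_left _ (mem_union_right _ (hA' h))
    · intro S T hS hT hp hne
      have hSnil : S = [] := by
        cases S with
        | nil => rfl
        | cons a S' => exact absurd (hS.2 a (by simp)) (by simp)
      have hTnil : T = [] := by
        cases T with
        | nil => rfl
        | cons a T' => exact absurd (hT.2 a (by simp)) (by simp)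
      subst hSnil; subst hTnil; exact absurd rfl hne
  · left
    push_neg at hex
    refine ⟨fun _ => ∅, fun _ _ => empty_subset _, fun _ _ _ _ _ => subset_rfl, ?_⟩
    intro A hA
    simpa using hex A hA


end AuxHelpers2

section AuxHelpers3
variable {V : Type*} [DecidableEq V] [Fintype V]

lemma no_both (X Y : Finset V) (hd : Disjoint X Y) (hc : X ∪ Y = Finset.univ)
    (c : Finset V → Bool) (hr : RedXGoodCopy c X) (hb : BlueYShrub c Y) : False := by
  obtain ⟨φ, hemb, hgoodX, hred⟩ := hr
  obtain ⟨τ, ⟨hτ1, hτ2⟩, hblue⟩ := hb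
  have final : ∀ S, OrdSubset Y S → φ (τ S ∩ X) ∩ Y = S.toFinset → False := by
    intro S hS heq
    have hA : τ S ∩ X ⊆ X := inter_subset_right
    have hφ : φ (τ S ∩ X) = τ S := by
      ext v
      have hv : v ∈ X ∪ Y := hc ▸ mem_univ v
      rcases mem_union.mp hv with hvX | hvY
      · constructor
        · intro h
          have : v ∈ φ (τ S ∩ X) ∩ X := mem_inter.mpr ⟨h, hvX⟩
          rw [hgoodX _ hA] at this
          exact (mem_inter.mp this).1
        · intro h
          have : v ∈ φ (τ S ∩ X) ∩ X := by
            rw [hgoodX _ hA]; exact mem_inter.mpr ⟨h, hvX⟩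
          exact (mem_inter.mp this).1
      · constructor
        · intro h
          have : v ∈ φ (τ S ∩ X) ∩ Y := mem_inter.mpr ⟨h, hvY⟩
          rw [heq, ← hτ2 S hS] at this
          exact (mem_inter.mp this).1
        · intro h
          have : v ∈ φ (τ S ∩ X) ∩ Y := by
            rw [heq, ← hτ2 S hS]; exact mem_inter.mpr ⟨h, hvY⟩
          exact (mem_inter.mp this).1
    have h1 := hred _ hA
    have h2 := hblue S hS
    rw [hφ, h2] at h1
    exact Bool.noConfusion h1
  have key : ∀ k (S : List V), OrdSubset Y S → S.toFinset ⊆ φ (τ S ∩ X) ∩ Y →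
      Y.card ≤ S.length + k → False := by
    intro k
    induction k with
    | zero =>
      intro S hS hsub hcard
      have hSY : S.toFinset ⊆ Y := fun v hv => hS.2 v (List.mem_toFinset.mp hv)
      have hlen : S.toFinset.card = S.length := List.toFinset_card_of_nodup hS.1
      have hY : S.toFinset = Y := eq_of_subset_of_card_le hSY (by omega)
      have heq : φ (τ S ∩ X) ∩ Y = S.toFinset :=
        subset_antisymm (hY ▸ inter_subset_right) hsub
      exact final S hS heq
    | succ k ih =>
      intro S hS hsub hcard
      by_cases he : φ (τ S ∩ X) ∩ Y = S.toFinset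
      · exact final S hS he
      · have : ∃ y, y ∈ φ (τ S ∩ X) ∩ Y ∧ y ∉ S.toFinset := by
          by_contra hcon
          push_neg at hcon
          exact he (subset_antisymm (fun v hv => hcon v hv) hsub)
        obtain ⟨y, hymem, hyS⟩ := this
        have hyY : y ∈ Y := (mem_inter.mp hymem).2
        have hS' : OrdSubset Y (S ++ [y]) := by
          refine ⟨?_, ?_⟩
          · rw [List.nodup_append]
            refine ⟨hS.1, List.nodup_singleton y, ?_⟩
            intro a ha b hb hab
            simp at hb; subst hab; subst hb
            exact hyS (List.mem_toFinset.mpr ha)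
          · intro v hv
            rcases List.mem_append.mp hv with h | h
            · exact hS.2 v h
            · simp at h; subst h; exact hyY
        have hpre : S <+: (S ++ [y]) := ⟨[y], rfl⟩
        have hsubτ : τ S ⊆ τ (S ++ [y]) := (hτ1 S _ hS hS').mp hpre
        have hmonoφ : φ (τ S ∩ X) ∩ Y ⊆ φ (τ (S ++ [y]) ∩ X) ∩ Y := by
          apply inter_subset_inter _ subset_rfl
          apply (hemb _ _ inter_subset_right inter_subset_right).mp
          exact inter_subset_inter hsubτ subset_rfl
        apply ih (S ++ [y]) hS'
        · rw [List.toFinset_append]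
          simp only [List.toFinset_cons, List.toFinset_nil]
          intro v hv
          rcases mem_union.mp hv with h | h
          · exact hmonoφ (hsub h)
          · simp at h; subst h; exact hmonoφ hymem
        · simp; omega
  exact key Y.card [] ⟨List.nodup_nil, by simp⟩ (by simp) (by simp)


lemma main_lemma (c : Finset V → Bool) (hΛ : NoBlueLambda c) :
    ∀ n : ℕ, ∀ F X Y : Finset V, Disjoint F X → Disjoint F Y → Disjoint X Y → Y.card ≤ n →
    (∃ g : Finset V → Finset V,
        (∀ A, A ⊆ X → g A ⊆ Y) ∧
        (∀ A B, A ⊆ X → B ⊆ X → A ⊆ B → g A ⊆ g B) ∧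
        (∀ A, A ⊆ X → c (F ∪ A ∪ g A) = false)) ∨
      ShrubAbove c F X Y := by
  intro n
  induction n with
  | zero =>
    intro F X Y hFX hFY hXY hcard
    have hY : Y = ∅ := card_eq_zero.mp (Nat.le_zero.mp hcard)
    subst hY
    exact empty_case c F X
  | succ n ih =>
    intro F X Y hFX hFY hXY hcard
    rcases Y.eq_empty_or_nonempty with hY | hYne
    · subst hY; exact empty_case c F X
    by_cases hsh : ShrubAbove c F X Y
    · exact Or.inr hsh
    left
    classical
    -- Claim 1 : every root has a bad branch direction
    have claim1 : ∀ R : Finset V, R ⊆ X → c (F ∪ R) = true →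
        ∃ y ∈ Y, ¬ ShrubAbove c (F ∪ R ∪ {y}) (X \ R) (Y.erase y) := by
      intro R hR hbR
      by_contra hcon
      push_neg at hcon
      apply hsh
      choose τf hτf1 hτf2 using fun (y : V) (hy : y ∈ Y) => hcon y hy
      refine ⟨fun S => match S with
        | [] => F ∪ R
        | y :: S' => if hy : y ∈ Y then τf y hy S' else ∅, ?_, ?_⟩
      · intro S hS
        match S with
        | [] =>
          refine ⟨subset_union_left, ?_, ?_, hbR⟩
          · intro v hv; rcases mem_union.mp hv with h | h
            · exact mem_union_left _ (mem_union_left _ h)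
            · exact mem_union_left _ (mem_union_right _ (hR h))
          · simp only [List.toFinset_nil]
            apply eq_empty_of_forall_notMem
            intro v hv
            obtain ⟨hv1, hv2⟩ := mem_inter.mp hv
            rcases mem_union.mp hv1 with h | h
            · exact (Finset.disjoint_left.mp hFY h) hv2
            · exact (Finset.disjoint_left.mp hXY (hR h)) hv2
        | y :: S' =>
          have hy : y ∈ Y := hS.2 y (by simp)
          have hS' : OrdSubset (Y.erase y) S' := by
            refine ⟨(List.nodup_cons.mp hS.1).2, ?_⟩
            intro v hv
            refine mem_erase.mpr ⟨?_, hS.2 v (List.mem_cons_of_mem _ hv)⟩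
            intro he; subst he
            exact (List.nodup_cons.mp hS.1).1 hv
          obtain ⟨hfloor, hrange, hgood, hblue⟩ := hτf1 y hy S' hS'
          simp only [dif_pos hy]
          have hyτ : y ∈ τf y hy S' := hfloor (by simp)
          refine ⟨?_, ?_, ?_, hblue⟩
          · exact (subset_union_left.trans subset_union_left).trans hfloor
          · intro v hv
            have := hrange hv
            simp only [mem_union, mem_sdiff, mem_singleton, mem_erase] at this ⊢
            rcases this with (((h | h) | h) | h) | h
            · exact Or.inl (Or.inl h)
            · exact Or.inl (Or.inr (hR h))
            · subst h; exact Or.inr hy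
            · exact Or.inl (Or.inr h.1)
            · exact Or.inr h.2
          · ext v
            simp only [mem_inter, List.toFinset_cons, mem_insert]
            constructor
            · rintro ⟨hv1, hv2⟩
              by_cases hvy : v = y
              · exact Or.inl hvy
              · have : v ∈ τf y hy S' ∩ Y.erase y :=
                  mem_inter.mpr ⟨hv1, mem_erase.mpr ⟨hvy, hv2⟩⟩
                rw [hgood] at this
                exact Or.inr this
            · rintro (h | h)
              · subst h; exact ⟨hyτ, hy⟩
              · have : v ∈ τf y hy S' ∩ Y.erase y := by rw [hgood]; exact h
                obtain ⟨h1, h2⟩ := mem_inter.mp this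
                exact ⟨h1, (mem_erase.mp h2).2⟩
      · intro S T hS hT hp hne
        match S, T with
        | [], [] => exact absurd rfl hne
        | [], y :: T' =>
          have hy : y ∈ Y := hT.2 y (by simp)
          have hT' : OrdSubset (Y.erase y) T' := by
            refine ⟨(List.nodup_cons.mp hT.1).2, ?_⟩
            intro v hv
            refine mem_erase.mpr ⟨?_, hT.2 v (List.mem_cons_of_mem _ hv)⟩
            intro he; subst he
            exact (List.nodup_cons.mp hT.1).1 hv
          obtain ⟨hfloor, _, _, _⟩ := hτf1 y hy T' hT'
          simp only [dif_pos hy]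
          refine (Finset.ssubset_iff_of_subset ?_).mpr ⟨y, hfloor (by simp), ?_⟩
          · exact subset_union_left.trans hfloor
          · intro hyFR
            rcases mem_union.mp hyFR with h | h
            · exact (Finset.disjoint_left.mp hFY h) hy
            · exact (Finset.disjoint_left.mp hXY (hR h)) hy
        | y :: S', T =>
          cases T with
          | nil => exact absurd (List.prefix_nil.mp hp) (by simp)
          | cons y' T' =>
            obtain ⟨hyy, hp'⟩ := List.cons_prefix_cons.mp hp
            subst hyy
            have hy : y ∈ Y := hS.2 y (by simp)
            have hS' : OrdSubset (Y.erase y) S' := by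
              refine ⟨(List.nodup_cons.mp hS.1).2, ?_⟩
              intro v hv
              refine mem_erase.mpr ⟨?_, hS.2 v (List.mem_cons_of_mem _ hv)⟩
              intro he; subst he
              exact (List.nodup_cons.mp hS.1).1 hv
            have hT' : OrdSubset (Y.erase y) T' := by
              refine ⟨(List.nodup_cons.mp hT.1).2, ?_⟩
              intro v hv
              refine mem_erase.mpr ⟨?_, hT.2 v (List.mem_cons_of_mem _ hv)⟩
              intro he; subst he
              exact (List.nodup_cons.mp hT.1).1 hv
            simp only [dif_pos hy]
            exact hτf2 y hy S' T' hS' hT' hp' (fun h => hne (by rw [h]))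
    -- per-root data : bad direction + red branch map from the induction hypothesis
    have rootdata : ∀ R : Finset V, ∃ (y : V) (g' : Finset V → Finset V),
        R ⊆ X → c (F ∪ R) = true →
        (y ∈ Y ∧
         (∀ B, B ⊆ X \ R → g' B ⊆ Y.erase y) ∧
         (∀ B B', B ⊆ X \ R → B' ⊆ X \ R → B ⊆ B' → g' B ⊆ g' B') ∧
         (∀ B, B ⊆ X \ R → c ((F ∪ R ∪ {y}) ∪ B ∪ g' B) = false)) := by
      intro R
      by_cases hroot : R ⊆ X ∧ c (F ∪ R) = true
      · obtain ⟨hR, hbR⟩ := hroot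
        obtain ⟨y, hy, hnsh⟩ := claim1 R hR hbR
        have hd1 : Disjoint (F ∪ R ∪ {y}) (X \ R) := by
          rw [Finset.disjoint_left]
          intro a ha hb
          obtain ⟨haX, haR⟩ := mem_sdiff.mp hb
          rcases mem_union.mp ha with h | h
          · rcases mem_union.mp h with h' | h'
            · exact (Finset.disjoint_left.mp hFX h') haX
            · exact haR h'
          · rw [mem_singleton] at h; subst h
            exact (Finset.disjoint_left.mp hXY haX) hy
        have hd2 : Disjoint (F ∪ R ∪ {y}) (Y.erase y) := by
          rw [Finset.disjoint_left]
          intro a ha hb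
          obtain ⟨hay, haY⟩ := mem_erase.mp hb
          rcases mem_union.mp ha with h | h
          · rcases mem_union.mp h with h' | h'
            · exact (Finset.disjoint_left.mp hFY h') haY
            · exact (Finset.disjoint_left.mp hXY (hR h')) haY
          · rw [mem_singleton] at h; exact hay h
        have hd3 : Disjoint (X \ R) (Y.erase y) := by
          rw [Finset.disjoint_left]
          intro a ha hb
          exact (Finset.disjoint_left.mp hXY (mem_sdiff.mp ha).1) (mem_erase.mp hb).2
        have hcard' : (Y.erase y).card ≤ n := by
          have h1 := card_erase_of_mem hy
          have h2 : 1 ≤ Y.card := card_pos.mpr ⟨y, hy⟩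
          omega
        rcases ih (F ∪ R ∪ {y}) (X \ R) (Y.erase y) hd1 hd2 hd3 hcard' with ⟨g', h1, h2, h3⟩ | hsh'
        · exact ⟨y, g', fun _ _ => ⟨hy, h1, h2, h3⟩⟩
        · exact absurd hsh' hnsh
      · exact ⟨hYne.choose, fun _ => ∅, fun h1 h2 => absurd ⟨h1, h2⟩ hroot⟩
    choose yFn gFn hspec using rootdata
    -- the collection of roots below A
    set L : Finset V → Finset (Finset V) :=
      fun A => A.powerset.filter (fun R => c (F ∪ R) = true) with hLdef
    have hLmem : ∀ A R : Finset V, R ∈ L A ↔ R ⊆ A ∧ c (F ∪ R) = true := by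
      intro A R; simp [hLdef]
    have hLmono : ∀ A B : Finset V, A ⊆ B → L A ⊆ L B := by
      intro A B hAB R hR
      rw [hLmem] at hR ⊢
      exact ⟨hR.1.trans hAB, hR.2⟩
    set bad : Finset V → Prop :=
      fun A => ∃ R₁ ∈ L A, ∃ R₂ ∈ L A, ¬ R₁ ⊆ R₂ ∧ ¬ R₂ ⊆ R₁ with hbaddef
    have hbadmono : ∀ A B : Finset V, A ⊆ B → bad A → bad B := by
      intro A B hAB ⟨R₁, h1, R₂, h2, h3⟩
      exact ⟨R₁, hLmono A B hAB h1, R₂, hLmono A B hAB h2, h3⟩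
    have hchain : ∀ A : Finset V, ¬ bad A → ∀ a ∈ L A, ∀ b ∈ L A, a ⊆ b ∨ b ⊆ a := by
      intro A hA a ha b hb
      by_contra h
      push_neg at h
      exact hA ⟨a, ha, b, hb, h.1, h.2⟩
    have hinfmem : ∀ A : Finset V, ¬ bad A → (L A).Nonempty → (L A).inf id ∈ L A :=
      fun A h1 h2 => inf_mem_chain (L A) h2 (hchain A h1)
    have hm_eq : ∀ A B : Finset V, A ⊆ B → (L A).Nonempty → ¬ bad B → (L B).Nonempty →
        (L A).inf id = (L B).inf id := by
      intro A B hAB hAne hBbad hBne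
      have hAbad : ¬ bad A := fun h => hBbad (hbadmono A B hAB h)
      have hA := hinfmem A hAbad hAne
      have hB := hinfmem B hBbad hBne
      have h1 : (L B).inf id ⊆ (L A).inf id := Finset.inf_mono (hLmono A B hAB)
      have h2 : (L B).inf id ⊆ A := h1.trans ((hLmem A _).mp hA).1
      have hBinA : (L B).inf id ∈ L A := (hLmem A _).mpr ⟨h2, ((hLmem B _).mp hB).2⟩
      exact le_antisymm (Finset.inf_le hBinA) h1
    -- the glued map
    set gd : Finset V → Finset V := fun A =>
      if bad A then Y
      else if (L A).Nonempty then
        insert (yFn ((L A).inf id)) (gFn ((L A).inf id) (A \ (L A).inf id))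
      else ∅ with hgddef
    have hg_bad : ∀ A : Finset V, bad A → gd A = Y := by
      intro A h; simp only [hgddef, if_pos h]
    have hg_chain : ∀ A : Finset V, ¬ bad A → (L A).Nonempty →
        gd A = insert (yFn ((L A).inf id)) (gFn ((L A).inf id) (A \ (L A).inf id)) := by
      intro A h1 h2; simp only [hgddef, if_neg h1, if_pos h2]
    have hg_emp : ∀ A : Finset V, ¬ (L A).Nonempty → gd A = ∅ := by
      intro A h
      have hnb : ¬ bad A := by
        intro ⟨R₁, h1, _⟩; exact h ⟨R₁, h1⟩
      simp only [hgddef, if_neg hnb, if_neg h]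
    -- property (i)
    have hgY : ∀ A : Finset V, A ⊆ X → gd A ⊆ Y := by
      intro A hA
      by_cases hb1 : bad A
      · rw [hg_bad A hb1]
      · by_cases hb2 : (L A).Nonempty
        · rw [hg_chain A hb1 hb2]
          have hm := hinfmem A hb1 hb2
          rw [hLmem] at hm
          have hmX : (L A).inf id ⊆ X := hm.1.trans hA
          obtain ⟨hyY, hs1, _, _⟩ := hspec _ hmX hm.2
          refine insert_subset hyY ?_
          have : A \ (L A).inf id ⊆ X \ (L A).inf id := sdiff_subset_sdiff hA subset_rfl
          exact (hs1 _ this).trans (erase_subset _ _)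
        · rw [hg_emp A hb2]; exact empty_subset _
    -- property (ii) : monotonicity
    have hgmono : ∀ A B : Finset V, A ⊆ X → B ⊆ X → A ⊆ B → gd A ⊆ gd B := by
      intro A B hA hB hAB
      by_cases hbB : bad B
      · rw [hg_bad B hbB]; exact hgY A hA
      · by_cases hneB : (L B).Nonempty
        · have hbA : ¬ bad A := fun h => hbB (hbadmono A B hAB h)
          by_cases hneA : (L A).Nonempty
          · rw [hg_chain A hbA hneA, hg_chain B hbB hneB,
                hm_eq A B hAB hneA hbB hneB]
            have hm := hinfmem B hbB hneB
            rw [hLmem] at hm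
            have hmX : (L B).inf id ⊆ X := hm.1.trans hB
            obtain ⟨_, _, hs2, _⟩ := hspec _ hmX hm.2
            apply insert_subset_insert
            exact hs2 _ _ (sdiff_subset_sdiff hA subset_rfl)
              (sdiff_subset_sdiff hB subset_rfl) (sdiff_subset_sdiff hAB subset_rfl)
          · rw [hg_emp A hneA]; exact empty_subset _
        · have hneA : ¬ (L A).Nonempty := fun h =>
            hneB (h.mono (hLmono A B hAB))
          rw [hg_emp A hneA, hg_emp B hneB]
    -- property (iii) : redness
    have hgred : ∀ A : Finset V, A ⊆ X → c (F ∪ A ∪ gd A) = false := by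
      intro A hA
      by_cases hb1 : bad A
      · rw [hg_bad A hb1]
        by_contra hcc
        rw [Bool.not_eq_false] at hcc
        obtain ⟨R₁, h1, R₂, h2, h12, h21⟩ := hb1
        rw [hLmem] at h1 h2
        obtain ⟨y₀, hy₀⟩ := hYne
        have hsub1 : F ∪ R₁ ⊆ F ∪ A ∪ Y :=
          union_subset (subset_union_left.trans subset_union_left)
            ((h1.1.trans subset_union_right).trans subset_union_left)
        have hsub2 : F ∪ R₂ ⊆ F ∪ A ∪ Y :=
          union_subset (subset_union_left.trans subset_union_left)
            ((h2.1.trans subset_union_right).trans subset_union_left)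
        have hy₀n : ∀ R : Finset V, R ⊆ A → y₀ ∉ F ∪ R := by
          intro R hR h
          rcases mem_union.mp h with h' | h'
          · exact (Finset.disjoint_left.mp hFY h') hy₀
          · exact (Finset.disjoint_left.mp hXY ((hR.trans hA) h')) hy₀
        have hns1 : ¬ (F ∪ R₁ ⊆ F ∪ R₂) := by
          intro h
          apply h12
          intro r hr
          have : r ∈ F ∪ R₂ := h (mem_union_right _ hr)
          rcases mem_union.mp this with h' | h'
          · exact absurd h' (Finset.disjoint_left.mp (hFX.symm) ((h1.1.trans hA) hr))
          · exact h'
        have hns2 : ¬ (F ∪ R₂ ⊆ F ∪ R₁) := by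
          intro h
          apply h21
          intro r hr
          have : r ∈ F ∪ R₁ := h (mem_union_right _ hr)
          rcases mem_union.mp this with h' | h'
          · exact absurd h' (Finset.disjoint_left.mp (hFX.symm) ((h2.1.trans hA) hr))
          · exact h'
        exact hΛ ⟨F ∪ R₁, F ∪ R₂, F ∪ A ∪ Y, h1.2, h2.2, hcc,
          (Finset.ssubset_iff_of_subset hsub1).mpr
            ⟨y₀, mem_union_right _ hy₀, hy₀n R₁ h1.1⟩,
          (Finset.ssubset_iff_of_subset hsub2).mpr
            ⟨y₀, mem_union_right _ hy₀, hy₀n R₂ h2.1⟩,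
          hns1, hns2⟩
      · by_cases hb2 : (L A).Nonempty
        · rw [hg_chain A hb1 hb2]
          have hm := hinfmem A hb1 hb2
          rw [hLmem] at hm
          have hmA : (L A).inf id ⊆ A := hm.1
          have hmX : (L A).inf id ⊆ X := hmA.trans hA
          obtain ⟨hyY, _, _, hs3⟩ := hspec _ hmX hm.2
          have hBsub : A \ (L A).inf id ⊆ X \ (L A).inf id := sdiff_subset_sdiff hA subset_rfl
          have hred := hs3 _ hBsub
          have hset : F ∪ A ∪ insert (yFn ((L A).inf id)) (gFn ((L A).inf id) (A \ (L A).inf id))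
              = (F ∪ (L A).inf id ∪ {yFn ((L A).inf id)}) ∪ (A \ (L A).inf id)
                ∪ gFn ((L A).inf id) (A \ (L A).inf id) := by
            ext v
            have hmv : v ∈ (L A).inf id → v ∈ A := fun h => hmA h
            simp only [mem_union, mem_insert, mem_singleton, mem_sdiff]
            constructor
            · rintro ((h | h) | h | h)
              · exact Or.inl (Or.inl (Or.inl (Or.inl h)))
              · by_cases hm' : v ∈ (L A).inf id
                · exact Or.inl (Or.inl (Or.inl (Or.inr hm')))
                · exact Or.inl (Or.inr ⟨h, hm'⟩)
              · exact Or.inl (Or.inl (Or.inr h))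
              · exact Or.inr h
            · rintro ((((h | h) | h) | h) | h)
              · exact Or.inl (Or.inl h)
              · exact Or.inl (Or.inr (hmv h))
              · exact Or.inr (Or.inl h)
              · exact Or.inl (Or.inr h.1)
              · exact Or.inr (Or.inr h)
          rw [hset]
          exact hred
        · rw [hg_emp A hb2, union_empty]
          by_contra hcc
          rw [Bool.not_eq_false] at hcc
          exact hb2 ⟨A, (hLmem A A).mpr ⟨subset_rfl, hcc⟩⟩
    exact ⟨gd, hgY, hgmono, hgred⟩



end AuxHelpers3

/-- Duality Theorem: Let `X`, `Y` be disjoint sets and let `Q(X ∪ Y)` be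
blue/red colored with no blue copy of `Λ`. Then exactly one of the following holds:
there is a red `X`-good copy of `Q(X)`, or there is a blue `Y`-shrub. -/
theorem statement14 {V : Type*} [DecidableEq V] [Fintype V]
    (X Y : Finset V) (hd : Disjoint X Y) (hc : X ∪ Y = Finset.univ)
    (c : Finset V → Bool) (hΛ : NoBlueLambda c) :
    Xor' (RedXGoodCopy c X) (BlueYShrub c Y) := by
  classical
  rcases main_lemma c hΛ Y.card ∅ X Y (by simp) (by simp) hd le_rfl with
    ⟨g, hg1, hg2, hg3⟩ | hsh
  · have hred : RedXGoodCopy c X := by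
      refine ⟨fun A => A ∪ g A, ?_, ?_, ?_⟩
      · intro A B hA hB
        constructor
        · intro h; exact union_subset_union h (hg2 A B hA hB h)
        · intro h a ha
          have h2 : a ∈ B ∪ g B := h (mem_union_left _ ha)
          rcases mem_union.mp h2 with h' | h'
          · exact h'
          · exact absurd (hg1 B hB h') (Finset.disjoint_left.mp hd (hA ha))
      · intro A hA
        ext v
        simp only [mem_inter, mem_union]
        constructor
        · rintro ⟨h1 | h1, h2⟩
          · exact h1
          · exact absurd (hg1 A hA h1) (Finset.disjoint_left.mp hd h2)
        · intro h; exact ⟨Or.inl h, hA h⟩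
      · intro A hA
        have := hg3 A hA
        rwa [empty_union] at this
    exact Or.inl ⟨hred, fun hblue => no_both X Y hd hc c hred hblue⟩
  · have hblue : BlueYShrub c Y := by
      obtain ⟨τ, hτ1, hτ2⟩ := hsh
      have hb : ∀ S, OrdSubset Y S → c (τ S) = true := fun S hS => (hτ1 S hS).2.2.2
      have hw : IsWeakShrubMap Y τ := ⟨hτ2, fun S hS => (hτ1 S hS).2.2.1⟩
      exact ⟨τ, weak_to_strong hΛ hw hb, hb⟩
    exact Or.inr ⟨hblue, fun hred => no_both X Y hd hc c hred hblue⟩
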